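/- Let 0 < c₀ < 1/2 and let (u,z) : ℝ → ℝ² with u > 0 solve the reduced system u' = z, z' = u³ − u + (c₀²/u)·(2(u²+z²)/(u⁴+c₀²) − 1). Then H₀(x) = (1 + c₀²/u⁴)·z²/2 − (1 − u² − c₀²/u²)²/4 is constant along the solution. -/

import Mathlib

theorem stmt_10 (c₀ : ℝ) (hc : 0 < c₀) (hc' : c₀ < 1 / 2)
    (u z : ℝ → ℝ) (hpos : ∀ x, 0 < u x)
    (hu : ∀ x, HasDerivAt u (z x) x)
    (hz : ∀ x, HasDerivAt z
      ((u x) ^ 3 - u x + (c₀ ^ 2 / u x) *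
        (2 * ((u x) ^ 2 + (z x) ^ 2) / ((u x) ^ 4 + c₀ ^ 2) - 1)) x) :
    ∀ x y : ℝ,
      (1 + c₀ ^ 2 / (u x) ^ 4) * (z x) ^ 2 / 2
        - (1 - (u x) ^ 2 - c₀ ^ 2 / (u x) ^ 2) ^ 2 / 4 =
      (1 + c₀ ^ 2 / (u y) ^ 4) * (z y) ^ 2 / 2
        - (1 - (u y) ^ 2 - c₀ ^ 2 / (u y) ^ 2) ^ 2 / 4 := by
  set H : ℝ → ℝ := fun x =>
    (1 + c₀ ^ 2 / (u x) ^ 4) * (z x) ^ 2 / 2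
      - (1 - (u x) ^ 2 - c₀ ^ 2 / (u x) ^ 2) ^ 2 / 4 with hH
  have key : ∀ x, HasDerivAt H 0 x := by
    intro x
    have hne : u x ≠ 0 := (hpos x).ne'
    have hne4 : (u x) ^ 4 ≠ 0 := pow_ne_zero _ hne
    have hne2 : (u x) ^ 2 ≠ 0 := pow_ne_zero _ hne
    have hden : (u x) ^ 4 + c₀ ^ 2 ≠ 0 := by positivity
    have hu' := hu x
    have hz' := hz x
    have h1 := (hasDerivAt_const x (c₀ ^ 2)).div (hu'.pow 4) hne4
    have h2 := (hasDerivAt_const x (c₀ ^ 2)).div (hu'.pow 2) hne2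
    have hD := ((((hasDerivAt_const x (1:ℝ)).add h1).mul (hz'.pow 2)).div_const 2).sub
      (((((hasDerivAt_const x (1:ℝ)).sub (hu'.pow 2)).sub h2).pow 2).div_const 4)
    refine hD.congr_deriv ?_
    simp only [Pi.add_apply, Pi.sub_apply, Pi.div_apply, Pi.pow_apply, Pi.mul_apply, Nat.reduceSub, Nat.cast_ofNat]
    field_simp
    ring
  have hdiff : Differentiable ℝ H := fun x => (key x).differentiableAt
  have hderiv : ∀ x, deriv H x = 0 := fun x => (key x).deriv
  intro x y
  exact is_const_of_deriv_eq_zero hdiff hderiv x y
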